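/- The set AC(ℤ) of almost convergent bounded functions on ℤ (functions whose Banach density mean value is unique) is not closed under pointwise multiplication: there exist sets A, B ⊆ ℤ each with Banach density 1/2 such that 𝟙_A and 𝟙_B are almost convergent but 𝟙_{A∩B} is not, since A ∩ B has lower Banach density 0 and upper Banach density 1/2. -/

import Mathlib

open Filter Set

/-- The Cesàro window average `s_{N,f}(n) = (1/N) ∑_{k=n}^{n+N-1} f(k)`. -/
noncomputable def winAvg (f : ℤ → ℝ) (N : ℕ) (n : ℤ) : ℝ :=
  (∑ k ∈ Finset.range N, f (n + k)) / N

namespace ACProof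

/-- Mirror map: fold `ℤ` onto `ℕ`, pairing `x` with `-1-x`. -/
def mir (x : ℤ) : ℕ := (if 0 ≤ x then x else -1 - x).toNat

/-- Block index of `x`: `eB x = k` iff `mir x ∈ [2k², 2(k+1)²)`. -/
def eB (x : ℤ) : ℕ := Nat.sqrt (mir x / 2)

def Aset : Set ℤ := {x | Even x}
def Bset : Set ℤ := {x | Even x ↔ Even (eB x)}

lemma mir_pair {m : ℤ} (hm : Even m) : mir m / 2 = mir (m + 1) / 2 := by
  have h2 : m % 2 = 0 := Int.even_iff.mp hm
  unfold mir
  split <;> split <;> omega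

lemma eB_pair {m : ℤ} (hm : Even m) : eB m = eB (m + 1) := by
  unfold eB; rw [mir_pair hm]

lemma indicator_mem_01 (X : Set ℤ) (x : ℤ) :
    0 ≤ X.indicator (1 : ℤ → ℝ) x ∧ X.indicator (1 : ℤ → ℝ) x ≤ 1 := by
  by_cases h : x ∈ X <;> simp [Set.indicator_apply, h]

lemma pairA {m : ℤ} (hm : Even m) :
    Aset.indicator (1 : ℤ → ℝ) m + Aset.indicator 1 (m + 1) = 1 := by
  have ho : ¬ Even (m + 1) := by simp [Int.even_add_one, hm]
  have h1 : m ∈ Aset := hm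
  have h2 : (m + 1) ∉ Aset := ho
  rw [Set.indicator_of_mem h1, Set.indicator_of_notMem h2]
  simp

lemma pairB {m : ℤ} (hm : Even m) :
    Bset.indicator (1 : ℤ → ℝ) m + Bset.indicator 1 (m + 1) = 1 := by
  have ho : ¬ Even (m + 1) := by simp [Int.even_add_one, hm]
  have hmem : m ∈ Bset ↔ Even (eB m) := by
    simp only [Bset, Set.mem_setOf_eq]
    tauto
  have hmem1 : (m + 1) ∈ Bset ↔ ¬ Even (eB m) := by
    simp only [Bset, Set.mem_setOf_eq, ← eB_pair hm]
    tauto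
  by_cases h : Even (eB m)
  · rw [Set.indicator_of_mem (hmem.mpr h),
      Set.indicator_of_notMem (by rw [hmem1]; exact not_not_intro h)]
    simp
  · rw [Set.indicator_of_notMem (by rw [hmem]; exact h),
      Set.indicator_of_mem (hmem1.mpr h)]
    simp

section generic
variable {f : ℤ → ℝ}

lemma sum_pair_eq (hp : ∀ m : ℤ, Even m → f m + f (m + 1) = 1) :
    ∀ (m : ℕ) (n : ℤ), Even n → ∑ k ∈ Finset.range (2 * m), f (n + k) = m := by
  intro m
  induction m with
  | zero => simp
  | succ m ih =>
    intro n hn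
    have h1 : 2 * (m + 1) = (2 * m) + 1 + 1 := by ring
    rw [h1, Finset.sum_range_succ, Finset.sum_range_succ, ih n hn]
    have he : Even (n + (2 * m : ℕ)) := by
      rcases hn with ⟨a, rfl⟩
      exact ⟨a + m, by push_cast; ring⟩
    have h2 := hp _ he
    have h3 : n + ((2 * m : ℕ) : ℤ) + 1 = n + (((2 * m + 1 : ℕ)) : ℤ) := by push_cast; ring
    rw [h3] at h2
    set z := f (n + ((2 * m : ℕ) : ℤ)) with hz
    set w := f (n + ((2 * m + 1 : ℕ) : ℤ)) with hw
    push_cast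
    linarith

lemma sum_bound_even (hp : ∀ m : ℤ, Even m → f m + f (m + 1) = 1)
    (h0 : ∀ x, 0 ≤ f x) (h1 : ∀ x, f x ≤ 1) (N : ℕ) {n : ℤ} (hn : Even n) :
    (N : ℝ) / 2 - 1/2 ≤ ∑ k ∈ Finset.range N, f (n + k) ∧
      ∑ k ∈ Finset.range N, f (n + k) ≤ (N : ℝ) / 2 + 1/2 := by
  rcases Nat.even_or_odd N with ⟨m, hm⟩ | ⟨m, hm⟩
  · have hm' : N = 2 * m := by omega
    subst hm'
    rw [sum_pair_eq hp m n hn]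
    constructor <;> push_cast <;> linarith
  · have hm' : N = 2 * m + 1 := by omega
    subst hm'
    rw [Finset.sum_range_succ, sum_pair_eq hp m n hn]
    have hy0 := h0 (n + ((2 * m : ℕ) : ℤ))
    have hy1 := h1 (n + ((2 * m : ℕ) : ℤ))
    set y := f (n + ((2 * m : ℕ) : ℤ)) with hy
    constructor <;> push_cast <;> linarith

lemma sum_bound (hp : ∀ m : ℤ, Even m → f m + f (m + 1) = 1)
    (h0 : ∀ x, 0 ≤ f x) (h1 : ∀ x, f x ≤ 1) (N : ℕ) (n : ℤ) :
    (N : ℝ) / 2 - 1 ≤ ∑ k ∈ Finset.range N, f (n + k) ∧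
      ∑ k ∈ Finset.range N, f (n + k) ≤ (N : ℝ) / 2 + 1 := by
  rcases Int.even_or_odd n with hn | hn
  · have := sum_bound_even hp h0 h1 N hn
    exact ⟨by linarith [this.1], by linarith [this.2]⟩
  · cases N with
    | zero => simp
    | succ M =>
      have hsucc : ∑ k ∈ Finset.range (M + 1), f (n + k) =
          (∑ k ∈ Finset.range M, f ((n + 1) + k)) + f n := by
        rw [Finset.sum_range_succ' (fun k => f (n + k)) M]
        congr 1
        · apply Finset.sum_congr rfl
          intro k _
          congr 1
          push_cast
          ring
        · simp
      have hev : Even (n + 1) := by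
        rcases hn with ⟨a, rfl⟩
        exact ⟨a + 1, by ring⟩
      have hb := sum_bound_even hp h0 h1 M hev
      rw [hsucc]
      have hy0 := h0 n
      have hy1 := h1 n
      set y := f n with hy
      set S := ∑ k ∈ Finset.range M, f ((n + 1) + (k : ℤ)) with hS
      constructor <;> push_cast <;> [linarith [hb.1]; linarith [hb.2]]

lemma winAvg_nonneg (h0 : ∀ x, 0 ≤ f x) (N : ℕ) (n : ℤ) : 0 ≤ winAvg f N n := by
  apply div_nonneg _ (Nat.cast_nonneg N)
  exact Finset.sum_nonneg fun k _ => h0 _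

lemma winAvg_le_one (h1 : ∀ x, f x ≤ 1) (N : ℕ) (n : ℤ) : winAvg f N n ≤ 1 := by
  unfold winAvg
  rcases Nat.eq_zero_or_pos N with rfl | hN
  · simp
  · have hN' : (0 : ℝ) < N := by exact_mod_cast hN
    rw [div_le_one hN']
    calc ∑ k ∈ Finset.range N, f (n + k) ≤ ∑ _k ∈ Finset.range N, (1 : ℝ) :=
          Finset.sum_le_sum fun k _ => h1 _
      _ = N := by simp

lemma winAvg_bounds (hp : ∀ m : ℤ, Even m → f m + f (m + 1) = 1)
    (h0 : ∀ x, 0 ≤ f x) (h1 : ∀ x, f x ≤ 1) {N : ℕ} (hN : 1 ≤ N) (n : ℤ) :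
    1/2 - 1/(N : ℝ) ≤ winAvg f N n ∧ winAvg f N n ≤ 1/2 + 1/(N : ℝ) := by
  have hN' : (0 : ℝ) < N := by exact_mod_cast hN
  obtain ⟨hl, hu⟩ := sum_bound hp h0 h1 N n
  unfold winAvg
  constructor
  · rw [le_div_iff₀ hN']
    have : (1/2 - 1/(N : ℝ)) * N = (N : ℝ)/2 - 1 := by field_simp
    linarith
  · rw [div_le_iff₀ hN']
    have : (1/2 + 1/(N : ℝ)) * N = (N : ℝ)/2 + 1 := by field_simp
    linarith

lemma tendsto_half_of_bounds (g : ℕ → ℝ)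
    (h : ∀ N : ℕ, 1 ≤ N → 1/2 - 1/(N : ℝ) ≤ g N ∧ g N ≤ 1/2 + 1/(N : ℝ)) :
    Tendsto g atTop (nhds (1/2)) := by
  have h0 : Tendsto (fun N : ℕ => 1/(N : ℝ)) atTop (nhds 0) :=
    tendsto_one_div_atTop_nhds_zero_nat
  have hlo : Tendsto (fun N : ℕ => 1/2 - 1/(N : ℝ)) atTop (nhds (1/2)) := by
    simpa using (tendsto_const_nhds (x := (1/2 : ℝ)) (f := atTop)).sub h0
  have hhi : Tendsto (fun N : ℕ => 1/2 + 1/(N : ℝ)) atTop (nhds (1/2)) := by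
    simpa using (tendsto_const_nhds (x := (1/2 : ℝ)) (f := atTop)).add h0
  refine tendsto_of_tendsto_of_tendsto_of_le_of_le' hlo hhi ?_ ?_
  · filter_upwards [eventually_ge_atTop 1] with N hN using (h N hN).1
  · filter_upwards [eventually_ge_atTop 1] with N hN using (h N hN).2

lemma bddBelow_winAvg (h0 : ∀ x, 0 ≤ f x) (N : ℕ) :
    BddBelow (Set.range fun n : ℤ => winAvg f N n) := by
  refine ⟨0, ?_⟩
  rintro x ⟨n, rfl⟩
  exact winAvg_nonneg h0 N n

lemma bddAbove_winAvg (h1 : ∀ x, f x ≤ 1) (N : ℕ) :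
    BddAbove (Set.range fun n : ℤ => winAvg f N n) := by
  refine ⟨1, ?_⟩
  rintro x ⟨n, rfl⟩
  exact winAvg_le_one h1 N n

lemma tendsto_inf_sup_half (hp : ∀ m : ℤ, Even m → f m + f (m + 1) = 1)
    (h0 : ∀ x, 0 ≤ f x) (h1 : ∀ x, f x ≤ 1) :
    Tendsto (fun N => ⨅ n : ℤ, winAvg f N n) atTop (nhds (1/2)) ∧
      Tendsto (fun N => ⨆ n : ℤ, winAvg f N n) atTop (nhds (1/2)) := by
  constructor
  · apply tendsto_half_of_bounds
    intro N hN
    constructor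
    · exact le_ciInf fun n => (winAvg_bounds hp h0 h1 hN n).1
    · exact (ciInf_le (bddBelow_winAvg h0 N) 0).trans (winAvg_bounds hp h0 h1 hN 0).2
  · apply tendsto_half_of_bounds
    intro N hN
    constructor
    · exact (winAvg_bounds hp h0 h1 hN 0).1.trans (le_ciSup (bddAbove_winAvg h1 N) 0)
    · exact ciSup_le fun n => (winAvg_bounds hp h0 h1 hN n).2

end generic

lemma sqrt_eq_of {k t : ℕ} (h1 : k * k ≤ t) (h2 : t < (k + 1) * (k + 1)) :
    Nat.sqrt t = k := by
  have hle : k ≤ Nat.sqrt t := Nat.le_sqrt.mpr h1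
  have hlt : Nat.sqrt t < k + 1 := Nat.sqrt_lt.mpr h2
  omega

lemma eB_window {k j : ℕ} (hj : j ≤ 4 * k + 1) : eB (2 * (k : ℤ) * k + j) = k := by
  have hx : (0 : ℤ) ≤ 2 * (k : ℤ) * k + j := by positivity
  have hcast : (2 * (k : ℤ) * k + (j : ℤ)) = ((2 * k * k + j : ℕ) : ℤ) := by
    push_cast; ring
  unfold eB mir
  rw [if_pos hx, hcast, Int.toNat_natCast]
  refine sqrt_eq_of ?_ ?_
  · rw [Nat.le_div_iff_mul_le (by norm_num : 0 < 2)]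
    nlinarith
  · rw [Nat.div_lt_iff_lt_mul (by norm_num : 0 < 2)]
    nlinarith

/-- A window of length `N` on which `A ∩ B` is empty. -/
lemma bad_window (N : ℕ) : ∃ n : ℤ, ∀ j ∈ Finset.range N,
    (Aset ∩ Bset).indicator (1 : ℤ → ℝ) (n + j) = 0 := by
  set k : ℕ := 2 * N + 1 with hk
  refine ⟨2 * (k : ℤ) * k, fun j hj => ?_⟩
  apply Set.indicator_of_notMem
  rintro ⟨hA, hB⟩
  have hj' : j ≤ 4 * k + 1 := by
    have := Finset.mem_range.mp hj
    omega
  have heq : eB (2 * (k : ℤ) * k + j) = k := eB_window hj'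
  have hEk : Even (eB (2 * (k : ℤ) * k + j)) := (hB : _ ↔ _).mp hA
  rw [heq] at hEk
  rcases hEk with ⟨a, ha⟩
  omega

/-- A window of length `N` on which `A ∩ B` agrees with `A`, with even start. -/
lemma good_window (N : ℕ) : ∃ n : ℤ, Even n ∧ ∀ j ∈ Finset.range N,
    (Aset ∩ Bset).indicator (1 : ℤ → ℝ) (n + j) = Aset.indicator 1 (n + j) := by
  set k : ℕ := 2 * N + 2 with hk
  refine ⟨2 * (k : ℤ) * k, ⟨(k : ℤ) * k, by ring⟩, fun j hj => ?_⟩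
  have hj' : j ≤ 4 * k + 1 := by
    have := Finset.mem_range.mp hj
    omega
  have heq : eB (2 * (k : ℤ) * k + j) = k := eB_window hj'
  have hEk : Even (eB (2 * (k : ℤ) * k + j)) := by
    rw [heq]; exact ⟨N + 1, by omega⟩
  by_cases hA : Even (2 * (k : ℤ) * k + (j : ℤ))
  · have hmA : (2 * (k : ℤ) * k + (j : ℤ)) ∈ Aset := hA
    have hmB : (2 * (k : ℤ) * k + (j : ℤ)) ∈ Bset := iff_of_true hA hEk
    rw [Set.indicator_of_mem (Set.mem_inter hmA hmB), Set.indicator_of_mem hmA]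
  · have hnA : (2 * (k : ℤ) * k + (j : ℤ)) ∉ Aset := hA
    rw [Set.indicator_of_notMem (fun h => hnA h.1), Set.indicator_of_notMem hnA]

lemma hpA0 : ∀ x, 0 ≤ Aset.indicator (1 : ℤ → ℝ) x := fun x => (indicator_mem_01 _ x).1
lemma hpA1 : ∀ x, Aset.indicator (1 : ℤ → ℝ) x ≤ 1 := fun x => (indicator_mem_01 _ x).2
lemma hpB0 : ∀ x, 0 ≤ Bset.indicator (1 : ℤ → ℝ) x := fun x => (indicator_mem_01 _ x).1
lemma hpB1 : ∀ x, Bset.indicator (1 : ℤ → ℝ) x ≤ 1 := fun x => (indicator_mem_01 _ x).2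
lemma hpI0 : ∀ x, 0 ≤ (Aset ∩ Bset).indicator (1 : ℤ → ℝ) x :=
  fun x => (indicator_mem_01 _ x).1
lemma hpI1 : ∀ x, (Aset ∩ Bset).indicator (1 : ℤ → ℝ) x ≤ 1 :=
  fun x => (indicator_mem_01 _ x).2

end ACProof

open ACProof in
/-- The set `AC(ℤ)` of almost convergent bounded functions on `ℤ` is not closed under
pointwise multiplication: there exist sets `A, B ⊆ ℤ`, each of Banach density `1/2`,
such that `𝟙_A` and `𝟙_B` are almost convergent but `𝟙_{A∩B}` is not, since `A ∩ B`
has lower Banach density `0` and upper Banach density `1/2`. -/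
theorem almostConvergent_not_closed_under_mul :
    ∃ A B : Set ℤ,
      Tendsto (fun N => ⨅ n : ℤ, winAvg (A.indicator 1) N n) atTop (nhds (1 / 2)) ∧
      Tendsto (fun N => ⨆ n : ℤ, winAvg (A.indicator 1) N n) atTop (nhds (1 / 2)) ∧
      Tendsto (fun N => ⨅ n : ℤ, winAvg (B.indicator 1) N n) atTop (nhds (1 / 2)) ∧
      Tendsto (fun N => ⨆ n : ℤ, winAvg (B.indicator 1) N n) atTop (nhds (1 / 2)) ∧
      Tendsto (fun N => ⨅ n : ℤ, winAvg ((A ∩ B).indicator 1) N n) atTop (nhds 0) ∧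
      Tendsto (fun N => ⨆ n : ℤ, winAvg ((A ∩ B).indicator 1) N n) atTop (nhds (1 / 2)) := by
  refine ⟨Aset, Bset, ?_, ?_, ?_, ?_, ?_, ?_⟩
  · exact (tendsto_inf_sup_half (fun m hm => pairA hm) hpA0 hpA1).1
  · exact (tendsto_inf_sup_half (fun m hm => pairA hm) hpA0 hpA1).2
  · exact (tendsto_inf_sup_half (fun m hm => pairB hm) hpB0 hpB1).1
  · exact (tendsto_inf_sup_half (fun m hm => pairB hm) hpB0 hpB1).2
  · -- infimum of A ∩ B averages is identically 0
    have hzero : ∀ N : ℕ, (⨅ n : ℤ, winAvg ((Aset ∩ Bset).indicator 1) N n) = 0 := by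
      intro N
      obtain ⟨n₀, hn₀⟩ := bad_window N
      have hv : winAvg ((Aset ∩ Bset).indicator 1) N n₀ = 0 := by
        unfold winAvg
        rw [Finset.sum_congr rfl fun j hj => hn₀ j hj]
        simp
      refine le_antisymm ?_ (le_ciInf fun n => winAvg_nonneg hpI0 N n)
      calc (⨅ n : ℤ, winAvg ((Aset ∩ Bset).indicator 1) N n)
          ≤ winAvg ((Aset ∩ Bset).indicator 1) N n₀ := ciInf_le (bddBelow_winAvg hpI0 N) n₀
        _ = 0 := hv
    have : (fun N => ⨅ n : ℤ, winAvg ((Aset ∩ Bset).indicator 1) N n) = fun _ => (0 : ℝ) := by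
      funext N; exact hzero N
    rw [this]
    exact tendsto_const_nhds
  · -- supremum of A ∩ B averages tends to 1/2
    apply tendsto_half_of_bounds
    intro N hN
    have hmono : ∀ n : ℤ, winAvg ((Aset ∩ Bset).indicator 1) N n ≤
        winAvg (Aset.indicator 1) N n := by
      intro n
      have hs : ∀ x, (Aset ∩ Bset).indicator (1 : ℤ → ℝ) x ≤ Aset.indicator 1 x :=
        fun x => Set.indicator_le_indicator_of_subset Set.inter_subset_left zero_le_one x
      unfold winAvg
      gcongr with j hj
      exact zero_le_one
      exact Set.inter_subset_left
    constructor
    · obtain ⟨n₀, hev, hn₀⟩ := good_window N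
      have hv : winAvg ((Aset ∩ Bset).indicator 1) N n₀ = winAvg (Aset.indicator 1) N n₀ := by
        unfold winAvg
        rw [Finset.sum_congr rfl fun j hj => hn₀ j hj]
      calc 1/2 - 1/(N : ℝ) ≤ winAvg (Aset.indicator 1) N n₀ :=
            (winAvg_bounds (fun m hm => pairA hm) hpA0 hpA1 hN n₀).1
        _ = winAvg ((Aset ∩ Bset).indicator 1) N n₀ := hv.symm
        _ ≤ ⨆ n : ℤ, winAvg ((Aset ∩ Bset).indicator 1) N n :=
            le_ciSup (bddAbove_winAvg hpI1 N) n₀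
    · refine ciSup_le fun n => (hmono n).trans ?_
      exact (winAvg_bounds (fun m hm => pairA hm) hpA0 hpA1 hN n).2
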